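/- Let q be a prime power, m a positive integer with m ≠ 2, n = q^{2m} − 1, and set s = q^{m + [m is even]} − 1 − (q^2 − 2)·[m is even]. Let Z = C_1 ∪ C_2 ∪ ⋯ ∪ C_s be the union of the q^2-ary cyclotomic cosets modulo n of 1, …, s. Then Z ∩ Z^{−q} ≠ ∅, where Z^{−q} = {(−qz) mod n : z ∈ Z}. -/
import Mathlib


/-- The `q`-ary cyclotomic coset of `x` modulo `n`: `{x q^k mod n : k ≥ 0}`. -/
def cycCoset (q n x : ℕ) : Set ℕ := {y | ∃ k : ℕ, y = x * q ^ k % n}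

lemma mem_helper (q n s x1 x2 k : ℕ)
    (hx1 : x1 ∈ Set.Icc 1 s) (hx2 : x2 ∈ Set.Icc 1 s) (hx2n : x2 < n)
    (heq : x1 * (q ^ 2) ^ k % n = (n - (q * x2) % n) % n) :
    ((⋃ x ∈ Set.Icc 1 s, cycCoset (q ^ 2) n x) ∩
      ((fun z => (n - (q * z) % n) % n) '' (⋃ x ∈ Set.Icc 1 s, cycCoset (q ^ 2) n x))) ≠ ∅ := by
  rw [← Set.nonempty_iff_ne_empty]
  refine ⟨x1 * (q ^ 2) ^ k % n, ?_, ?_⟩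
  · exact Set.mem_biUnion hx1 ⟨k, rfl⟩
  · exact ⟨x2, Set.mem_biUnion hx2 ⟨0, by simp [Nat.mod_eq_of_lt hx2n]⟩, heq.symm⟩

lemma mod_helper (A n B c : ℕ) (hc : A + B = (c + 1) * n) (hB0 : 0 < B) (hBn : B < n) :
    A % n = (n - B % n) % n := by
  have h1 : B % n = B := Nat.mod_eq_of_lt hBn
  have hc' : A + B = c * n + n := by rw [hc]; ring
  have hA : A = (n - B) + c * n := by omega
  rw [h1, hA, Nat.add_mul_mod_self_right, Nat.mod_eq_of_lt (show n - B < n by omega)]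

lemma facts (q B : ℕ) (hq : 2 ≤ q) (hB3 : q ^ 3 ≤ B) :
    8 ≤ B ∧ 4 ≤ q ^ 2 ∧ 8 ≤ q ^ 3 ∧ q ≤ q ^ 3 ∧ q ^ 2 ≤ q ^ 3 := by
  have h8 : 8 ≤ q ^ 3 := by calc (8:ℕ) = 2 ^ 3 := by norm_num
                                _ ≤ q ^ 3 := Nat.pow_le_pow_left hq 3
  have h4 : 4 ≤ q ^ 2 := by calc (4:ℕ) = 2 ^ 2 := by norm_num
                                _ ≤ q ^ 2 := Nat.pow_le_pow_left hq 2
  have hqle : q ≤ q ^ 3 := Nat.le_self_pow (by norm_num) q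
  have h23 : q ^ 2 ≤ q ^ 3 := Nat.pow_le_pow_right (by omega) (by norm_num)
  exact ⟨le_trans h8 hB3, h4, h8, hqle, h23⟩

lemma even_id (q B : ℕ) (hq : 2 ≤ q) (hB3 : q ^ 3 ≤ B) :
    (q ^ 2 * B - B - 1) * (q ^ 3 * B) + q * (q ^ 2 * B - q ^ 2 + 1)
      = (q ^ 3 - q) * (q ^ 2 * B ^ 2 - 1) := by
  obtain ⟨hB8, h4, h8, hqle, h23⟩ := facts q B hq hB3
  have h1 : 4 * B ≤ q ^ 2 * B := Nat.mul_le_mul_right B h4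
  have h2 : q ^ 2 * 1 ≤ q ^ 2 * B := Nat.mul_le_mul_left _ (by omega)
  have h3 : B + 1 ≤ q ^ 2 * B := by omega
  have h5 : (0:ℕ) < q ^ 2 * B ^ 2 := by positivity
  zify [show B ≤ q ^ 2 * B by omega, h3, hqle, show 1 ≤ q ^ 2 * B ^ 2 by omega,
    show q ^ 2 ≤ q ^ 2 * B by omega, show 1 ≤ q ^ 2 * B - B by omega]
  ring

lemma even_lt1 (q B : ℕ) (hq : 2 ≤ q) (hB3 : q ^ 3 ≤ B) :
    q * (q ^ 2 * B - q ^ 2 + 1) < q ^ 2 * B ^ 2 - 1 := by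
  obtain ⟨hB8, h4, h8, hqle, h23⟩ := facts q B hq hB3
  have step1 : q * (q ^ 2 * B - q ^ 2 + 1) ≤ q ^ 3 * B := by
    have h0 : q ^ 2 * B - q ^ 2 + 1 ≤ q ^ 2 * B := by
      have h2 : q ^ 2 * 1 ≤ q ^ 2 * B := Nat.mul_le_mul_left _ (by omega)
      omega
    calc q * (q ^ 2 * B - q ^ 2 + 1) ≤ q * (q ^ 2 * B) := Nat.mul_le_mul_left _ h0
      _ = q ^ 3 * B := by ring
  have step2 : q ^ 3 * B * 4 ≤ q ^ 2 * B ^ 2 := by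
    calc q ^ 3 * B * 4 = q ^ 2 * B * (4 * q) := by ring
      _ ≤ q ^ 2 * B * B := Nat.mul_le_mul_left _ (by
            calc 4 * q ≤ q ^ 2 * q := Nat.mul_le_mul_right q h4
              _ = q ^ 3 := by ring
              _ ≤ B := hB3)
      _ = q ^ 2 * B ^ 2 := by ring
  have hpos : 8 * 8 ≤ q ^ 3 * B := Nat.mul_le_mul h8 hB8
  calc q * (q ^ 2 * B - q ^ 2 + 1) ≤ q ^ 3 * B := step1
    _ < q ^ 2 * B ^ 2 - 1 := by omega

lemma even_lt2 (q B : ℕ) (hq : 2 ≤ q) (hB3 : q ^ 3 ≤ B) :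
    q ^ 2 * B - q ^ 2 + 1 < q ^ 2 * B ^ 2 - 1 := by
  obtain ⟨hB8, h4, h8, hqle, h23⟩ := facts q B hq hB3
  have step2 : q ^ 2 * B * 8 ≤ q ^ 2 * B ^ 2 := by
    calc q ^ 2 * B * 8 ≤ q ^ 2 * B * B := Nat.mul_le_mul_left _ hB8
      _ = q ^ 2 * B ^ 2 := by ring
  have h1 : 4 * B ≤ q ^ 2 * B := Nat.mul_le_mul_right B h4
  omega

lemma even_s (q B : ℕ) (hq : 2 ≤ q) (hB3 : q ^ 3 ≤ B) :
    q ^ 2 * B - 1 - (q ^ 2 - 2) = q ^ 2 * B - q ^ 2 + 1 ∧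
    1 ≤ q ^ 2 * B - B - 1 ∧ q ^ 2 * B - B - 1 ≤ q ^ 2 * B - q ^ 2 + 1 ∧
    1 ≤ q ^ 2 * B - q ^ 2 + 1 := by
  obtain ⟨hB8, h4, h8, hqle, h23⟩ := facts q B hq hB3
  have h1 : 4 * B ≤ q ^ 2 * B := Nat.mul_le_mul_right B h4
  have h2 : q ^ 2 * 1 ≤ q ^ 2 * B := Nat.mul_le_mul_left _ (by omega)
  have hq2B : q ^ 2 ≤ B := le_trans h23 hB3
  omega

lemma odd_id (q A : ℕ) (hq : 2 ≤ q) (hA : q ≤ A) :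
    (A - 1) * (q * A) + q * (A - 1) = q * (A ^ 2 - 1) := by
  have h1 : 1 ≤ A := by omega
  have h2 : 1 ≤ A ^ 2 := Nat.one_le_pow _ _ (by omega)
  zify [h1, h2]
  ring

lemma odd_lt (q A : ℕ) (hq : 2 ≤ q) (hA : q ≤ A) :
    q * (A - 1) < A ^ 2 - 1 ∧ 0 < q * (A - 1) ∧ A - 1 < A ^ 2 - 1 := by
  have hA1 : 1 ≤ A := by omega
  have h1 : q * (A - 1) ≤ A * (A - 1) := Nat.mul_le_mul_right _ hA
  have h2 : A * (A - 1) + A = A * A := by zify [hA1]; ring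
  have h3 : A ^ 2 = A * A := sq A
  have h4 : 2 * A ≤ A * A := Nat.mul_le_mul_right _ (by omega)
  have h5 : 0 < q * (A - 1) := Nat.mul_pos (by omega) (by omega)
  omega

theorem union_cycCosets_meets_negq
    (q m : ℕ) (hq : IsPrimePow q) (hm : 0 < m) (hm2 : m ≠ 2) :
    (⋃ x ∈ Set.Icc 1 (q ^ (m + (if Even m then 1 else 0)) - 1 -
        (q ^ 2 - 2) * (if Even m then 1 else 0)),
        cycCoset (q ^ 2) (q ^ (2 * m) - 1) x) ∩
      ((fun z => (q ^ (2 * m) - 1 - (q * z) % (q ^ (2 * m) - 1)) % (q ^ (2 * m) - 1)) ''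
        (⋃ x ∈ Set.Icc 1 (q ^ (m + (if Even m then 1 else 0)) - 1 -
          (q ^ 2 - 2) * (if Even m then 1 else 0)),
          cycCoset (q ^ 2) (q ^ (2 * m) - 1) x)) ≠ ∅ := by
  have hq2 : 2 ≤ q := hq.two_le
  by_cases hme : Even m
  · -- m even, so m ≥ 4
    obtain ⟨t, ht⟩ := hme
    have ht2 : 2 ≤ t := by omega
    have hme' : Even m := ⟨t, ht⟩
    simp only [if_pos hme', mul_one]
    set B := q ^ (m - 1) with hB
    have hB3 : q ^ 3 ≤ B := by
      rw [hB]; exact Nat.pow_le_pow_right (by omega) (by omega)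
    have hpm1 : q ^ (m + 1) = q ^ 2 * B := by rw [hB, ← pow_add]; congr 1; omega
    have hn : q ^ (2 * m) = q ^ 2 * B ^ 2 := by
      rw [hB, ← pow_mul, ← pow_add]; congr 1; omega
    have hpk : (q ^ 2) ^ (t + 1) = q ^ 3 * B := by
      rw [hB, ← pow_mul, ← pow_add]; congr 1; omega
    obtain ⟨hS, hx1a, hx1b, hx2a⟩ := even_s q B hq2 hB3
    rw [hpm1, hn, hS]
    obtain ⟨hB8, h4, h8, hqle, h23⟩ := facts q B hq2 hB3
    apply mem_helper (q := q) (n := q ^ 2 * B ^ 2 - 1) (s := q ^ 2 * B - q ^ 2 + 1)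
      (x1 := q ^ 2 * B - B - 1) (x2 := q ^ 2 * B - q ^ 2 + 1) (k := t + 1)
    · exact ⟨hx1a, hx1b⟩
    · exact ⟨hx2a, le_refl _⟩
    · exact even_lt2 q B hq2 hB3
    · apply mod_helper (c := q ^ 3 - q - 1)
      · have hq3' : q * 4 ≤ q * q ^ 2 := Nat.mul_le_mul_left q h4
        have hq3'' : q * q ^ 2 = q ^ 3 := by ring
        rw [show q ^ 3 - q - 1 + 1 = q ^ 3 - q by omega, hpk]
        exact even_id q B hq2 hB3
      · exact Nat.mul_pos (by omega) (by omega)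
      · exact even_lt1 q B hq2 hB3
  · -- m odd
    simp only [if_neg hme, mul_zero, add_zero, Nat.sub_zero]
    obtain ⟨t, ht⟩ := Nat.odd_iff.mpr (Nat.not_even_iff.mp hme)
    set A := q ^ m with hA
    have hAq : q ≤ A := by rw [hA]; exact Nat.le_self_pow (by omega) q
    have hn : q ^ (2 * m) = A ^ 2 := by rw [hA, ← pow_mul]; congr 1; omega
    have hpk : (q ^ 2) ^ (t + 1) = q * A := by
      rw [hA, ← pow_mul, ← pow_succ']; congr 1; omega
    rw [hn]
    obtain ⟨hlt1, hpos, hlt2⟩ := odd_lt q A hq2 hAq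
    apply mem_helper (q := q) (n := A ^ 2 - 1) (s := A - 1) (x1 := A - 1) (x2 := A - 1)
      (k := t + 1)
    · exact ⟨by omega, le_refl _⟩
    · exact ⟨by omega, le_refl _⟩
    · exact hlt2
    · apply mod_helper (c := q - 1)
      · rw [show q - 1 + 1 = q by omega, hpk]
        exact odd_id q A hq2 hAq
      · exact hpos
      · exact hlt1
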